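/- Let f be L₁-smooth in x, satisfy ‖∇_{tx}f(x;t)‖ ≤ L₂, be G₂-Lipschitz in t, and consider the FOA-Min prediction x_{k+1|k} = x_k − C₁ζh g_k/‖g_k‖ with 0 ≤ C₁ ≤ 1 and ‖g_k − ∇ₓf(x_k;t_k)‖ ≤ L₂h. Then f(x_{k+1|k};t_{k+1}) − f(x_k;t_k) ≤ (C₁L₂ζ + L₁ζ²/2)h² + G₂h. -/

import Mathlib

open InnerProductSpace

lemma descent_lemma {E : Type*} [NormedAddCommGroup E] [InnerProductSpace ℝ E] [CompleteSpace E]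
    (f : E → ℝ) (g : E → E) (L : ℝ)
    (hgrad : ∀ x, HasGradientAt f (g x) x)
    (hlip : ∀ x y, ‖g x - g y‖ ≤ L * ‖x - y‖) (x u : E) :
    f (x + u) - f x ≤ ⟪g x, u⟫_ℝ + L / 2 * ‖u‖ ^ 2 := by
  set φ : ℝ → ℝ := fun s => f (x + s • u) - (s * ⟪g x, u⟫_ℝ + L / 2 * s ^ 2 * ‖u‖ ^ 2) with hφ
  have hderiv : ∀ s : ℝ, HasDerivAt φ
      (⟪g (x + s • u), u⟫_ℝ - (⟪g x, u⟫_ℝ + L * s * ‖u‖ ^ 2)) s := by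
    intro s
    have hline : HasDerivAt (fun s : ℝ => x + s • u) u s := by
      simpa using ((hasDerivAt_id s).smul_const u).const_add x
    have h1 : HasDerivAt (fun s : ℝ => f (x + s • u)) (⟪g (x + s • u), u⟫_ℝ) s := by
      have := ((hgrad (x + s • u)).hasFDerivAt).comp_hasDerivAt s hline
      simpa [Function.comp_def] using this
    have h2 : HasDerivAt (fun s : ℝ => s * ⟪g x, u⟫_ℝ + L / 2 * s ^ 2 * ‖u‖ ^ 2)
        (⟪g x, u⟫_ℝ + L * s * ‖u‖ ^ 2) s := by
      have ha : HasDerivAt (fun s : ℝ => s * ⟪g x, u⟫_ℝ) (⟪g x, u⟫_ℝ) s := by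
        simpa using (hasDerivAt_id s).mul_const (⟪g x, u⟫_ℝ)
      have hb : HasDerivAt (fun s : ℝ => L / 2 * s ^ 2 * ‖u‖ ^ 2)
          (L * s * ‖u‖ ^ 2) s := by
        have : HasDerivAt (fun s : ℝ => s ^ 2) (2 * s) s := by
          simpa using hasDerivAt_pow 2 s
        have := ((this.const_mul (L / 2)).mul_const (‖u‖ ^ 2))
        exact this.congr_deriv (by ring)
      exact ha.add hb
    exact h1.sub h2
  have hmono : AntitoneOn φ (Set.Icc 0 1) := by
    apply antitoneOn_of_deriv_nonpos (convex_Icc 0 1)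
    · exact (Differentiable.continuous fun s => (hderiv s).differentiableAt).continuousOn
    · intro s hs
      exact ((hderiv s).differentiableAt).differentiableWithinAt
    · intro s hs
      rw [(hderiv s).deriv]
      simp only [interior_Icc, Set.mem_Ioo] at hs
      have h1 : ⟪g (x + s • u) - g x, u⟫_ℝ ≤ L * s * ‖u‖ ^ 2 := by
        calc ⟪g (x + s • u) - g x, u⟫_ℝ ≤ ‖g (x + s • u) - g x‖ * ‖u‖ :=
              real_inner_le_norm _ _
          _ ≤ (L * ‖(x + s • u) - x‖) * ‖u‖ := by
              gcongr; exact hlip _ _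
          _ = L * (|s| * ‖u‖) * ‖u‖ := by
              rw [add_sub_cancel_left, norm_smul]; norm_num
          _ = L * s * ‖u‖ ^ 2 := by rw [abs_of_pos hs.1]; ring
      have := inner_sub_left (𝕜 := ℝ) (g (x + s • u)) (g x) u
      linarith [this ▸ h1]
  have h01 : φ 1 ≤ φ 0 := hmono (by norm_num) (by norm_num) (by norm_num)
  simp only [hφ, one_smul, zero_smul, add_zero] at h01
  nlinarith [h01]

/-- Lemma 4(a): the FOA-Min/CP prediction satisfies
f(x_{k+1|k};t_{k+1}) − f(x_k;t_k) ≤ (C₁L₂ζ + L₁ζ²/2)h² + G₂h. -/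
theorem stmt_12 {d : ℕ}
    (f : EuclideanSpace ℝ (Fin d) → ℝ → ℝ)
    (g : EuclideanSpace ℝ (Fin d) → ℝ → EuclideanSpace ℝ (Fin d))
    (L₁ L₂ G₂ h ζ C₁ : ℝ) (hL₁ : 0 < L₁) (hh : 0 < h) (hζ : 0 < ζ)
    (hC₁ : 0 ≤ C₁) (hC₁' : C₁ ≤ 1) (hG₂ : 0 ≤ G₂)
    (hgrad : ∀ (t : ℝ) (x : EuclideanSpace ℝ (Fin d)),
      HasGradientAt (fun y => f y t) (g x t) x)
    (hlipg : ∀ (t : ℝ) (x y : EuclideanSpace ℝ (Fin d)),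
      ‖g x t - g y t‖ ≤ L₁ * ‖x - y‖)
    (hlipt : ∀ (x : EuclideanSpace ℝ (Fin d)) (s t : ℝ),
      |f x s - f x t| ≤ G₂ * |s - t|)
    (xk : EuclideanSpace ℝ (Fin d)) (tk : ℝ)
    (gk : EuclideanSpace ℝ (Fin d)) (hgk : gk ≠ 0)
    (hgkerr : ‖gk - g xk tk‖ ≤ L₂ * h) :
    f (xk - ((C₁ * ζ * h) / ‖gk‖) • gk) (tk + h) - f xk tk ≤
      (C₁ * L₂ * ζ + L₁ * ζ ^ 2 / 2) * h ^ 2 + G₂ * h := by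
  set c : ℝ := (C₁ * ζ * h) / ‖gk‖ with hc
  have hgknorm : 0 < ‖gk‖ := norm_pos_iff.mpr hgk
  have hc0 : 0 ≤ c := div_nonneg (by positivity) hgknorm.le
  set u : EuclideanSpace ℝ (Fin d) := -(c • gk) with hu
  have hxu : xk - c • gk = xk + u := by rw [hu, sub_eq_add_neg]
  have hnu : ‖u‖ = C₁ * ζ * h := by
    rw [hu, norm_neg, norm_smul, Real.norm_of_nonneg hc0, hc,
      div_mul_cancel₀ _ hgknorm.ne']
  -- spatial descent
  have hdesc := descent_lemma (fun y => f y tk) (fun x => g x tk) L₁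
    (hgrad tk) (fun x y => hlipg tk x y) xk u
  -- inner product bound
  have hinner : ⟪g xk tk, u⟫_ℝ ≤ C₁ * L₂ * ζ * h ^ 2 := by
    have h1 : ⟪gk, u⟫_ℝ = -(c * ‖gk‖ ^ 2) := by
      rw [hu, inner_neg_right, inner_smul_right, real_inner_self_eq_norm_sq]
    have h2 : ⟪g xk tk - gk, u⟫_ℝ ≤ L₂ * h * (C₁ * ζ * h) := by
      calc ⟪g xk tk - gk, u⟫_ℝ ≤ ‖g xk tk - gk‖ * ‖u‖ := real_inner_le_norm _ _
        _ ≤ (L₂ * h) * (C₁ * ζ * h) := by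
            rw [hnu, norm_sub_rev]
            exact mul_le_mul hgkerr le_rfl (by positivity)
              (le_trans (norm_nonneg _) hgkerr)
    have h3 : ⟪g xk tk, u⟫_ℝ = ⟪gk, u⟫_ℝ + ⟪g xk tk - gk, u⟫_ℝ := by
      rw [inner_sub_left]; ring
    have h4 : 0 ≤ c * ‖gk‖ ^ 2 := by positivity
    rw [h3, h1]; nlinarith
  -- time Lipschitz
  have htime : f (xk + u) (tk + h) - f (xk + u) tk ≤ G₂ * h := by
    have := hlipt (xk + u) (tk + h) tk
    rw [add_sub_cancel_left, abs_of_pos hh] at this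
    exact (le_abs_self _).trans this
  have hsq : L₁ / 2 * ‖u‖ ^ 2 ≤ L₁ * ζ ^ 2 / 2 * h ^ 2 := by
    have hC2 : C₁ ^ 2 ≤ 1 := by nlinarith
    rw [hnu]
    nlinarith [hC2, mul_pos (mul_pos hL₁ (pow_pos hζ 2)) (pow_pos hh 2)]
  rw [hxu]
  have : f (xk + u) (tk + h) - f xk tk =
      (f (xk + u) (tk + h) - f (xk + u) tk) + ((fun y => f y tk) (xk + u) - f xk tk) := by
    ring
  rw [this]
  nlinarith [hdesc, hinner, htime, hsq]
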